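/- Let ν be an admissible profile with dual profile ν'(α') := ⌊⌊ α' + inf{α : ν(α) - α > α'} ⌋⌋, where ⌊⌊β⌋⌋ equals -∞ if β < 0, β if 0 ≤ β ≤ 1, and 1 if β > 1. Then ν' is right-continuous. -/

import Mathlib

noncomputable section
open Filter Set Topology

/-- Clamp an extended real into `{-∞} ∪ [0,1]`. -/
def clamp (b : EReal) : EReal := if b < 0 then ⊥ else min b 1

/-- The dual profile `ν'(α') = ⌊⌊ α' + inf{α : ν(α) - α > α'} ⌋⌋` (with `inf ∅ = +∞`). -/
def dualProfile (ν : ℝ → EReal) (a' : ℝ) : EReal :=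
  clamp ((a' : EReal) +
    sInf ((fun a : ℝ => (a : EReal)) '' {a : ℝ | (a' : EReal) < ν a - (a : EReal)}))

lemma clamp_rc (x : EReal) : ContinuousWithinAt clamp (Set.Ici x) x := by
  rcases lt_or_ge x 0 with hx | hx
  · have hev : ∀ᶠ y in 𝓝[Set.Ici x] x, clamp y = (⊥ : EReal) := by
      filter_upwards [mem_nhdsWithin_of_mem_nhds (Iio_mem_nhds hx)] with y hy
      exact if_pos hy
    have hx' : clamp x = ⊥ := if_pos hx
    have : Tendsto (fun _ : EReal => (⊥ : EReal)) (𝓝[Set.Ici x] x) (𝓝 ⊥) :=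
      tendsto_const_nhds
    have := this.congr' (by filter_upwards [hev] with y hy using hy.symm)
    rw [ContinuousWithinAt, hx']
    exact this
  · have hc : ContinuousWithinAt (fun y : EReal => min y 1) (Set.Ici x) x :=
      (continuous_id.min continuous_const).continuousWithinAt
    exact hc.congr (fun y hy => by simp [clamp, not_lt.2 (hx.trans hy)])
      (by simp [clamp, not_lt.2 hx])

theorem stmt5 (ν : ℝ → EReal)
    (hmono : Monotone ν)
    (hrc : ∀ a : ℝ, ContinuousWithinAt ν (Set.Ici a) a)
    (hval : ∀ a : ℝ, ν a = ⊥ ∨ (0 ≤ ν a ∧ ν a ≤ 1))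
    (hne : ∃ a : ℝ, ν a ≠ ⊥) :
    ∀ a' : ℝ, ContinuousWithinAt (dualProfile ν) (Set.Ici a') a' := by
  have S : ℝ → Set ℝ := fun b => {a : ℝ | (b : EReal) < ν a - (a : EReal)}
  set g : ℝ → EReal := fun b =>
    sInf ((fun a : ℝ => (a : EReal)) '' {a : ℝ | (b : EReal) < ν a - (a : EReal)}) with hg
  set h : ℝ → EReal := fun b => (b : EReal) + g b with hh
  have gmono : Monotone g := by
    intro x y hxy
    apply sInf_le_sInf
    apply Set.image_mono
    intro a ha
    exact lt_of_le_of_lt (EReal.coe_le_coe_iff.2 hxy) ha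
  have hmonoH : Monotone h := fun x y hxy =>
    add_le_add (by exact_mod_cast hxy) (gmono hxy)
  intro a'
  -- key: the right limit of h equals h a'
  have key : sInf (h '' Set.Ioi a') = h a' := by
    refine le_antisymm ?_ (le_sInf ?_)
    · by_contra hc
      push_neg at hc
      set c := sInf (h '' Set.Ioi a') with hcdef
      have h1 : (a' : EReal) + g a' < c := hc
      have h2 : g a' < c - (a' : EReal) := by
        rw [EReal.lt_sub_iff_add_lt (Or.inl (EReal.coe_ne_bot a')) (Or.inl (EReal.coe_ne_top a'))]
        rw [add_comm]; exact h1
      obtain ⟨x, hx, hxlt⟩ := sInf_lt_iff.1 h2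
      obtain ⟨α, hαS, rfl⟩ := hx
      have hα2 : (α : EReal) + (a' : EReal) < c := by
        rwa [EReal.lt_sub_iff_add_lt (Or.inl (EReal.coe_ne_bot a'))
          (Or.inl (EReal.coe_ne_top a'))] at hxlt
      have hαS' : (a' : EReal) < ν α - (α : EReal) := hαS
      have hmin : (a' : EReal) < min (ν α - (α : EReal)) (c - (α : EReal)) := by
        refine lt_min hαS' ?_
        rw [EReal.lt_sub_iff_add_lt (Or.inl (EReal.coe_ne_bot α)) (Or.inl (EReal.coe_ne_top α))]
        rwa [add_comm] at hα2
      obtain ⟨b, hb1, hb2⟩ := EReal.exists_between_coe_real hmin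
      have hbS : α ∈ {a : ℝ | (b : EReal) < ν a - (a : EReal)} :=
        lt_of_lt_of_le hb2 (min_le_left _ _)
      have hgb : g b ≤ (α : EReal) := sInf_le ⟨α, hbS, rfl⟩
      have hhb : h b ≤ (b : EReal) + (α : EReal) := add_le_add le_rfl hgb
      have hbα : (b : EReal) + (α : EReal) < c := by
        have := lt_of_lt_of_le hb2 (min_le_right _ _)
        rwa [EReal.lt_sub_iff_add_lt (Or.inl (EReal.coe_ne_bot α))
          (Or.inl (EReal.coe_ne_top α))] at this
      have hcle : c ≤ h b := sInf_le ⟨b, by exact_mod_cast hb1, rfl⟩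
      exact absurd hcle (not_le.2 (hhb.trans_lt hbα))
    · rintro y ⟨b, hb, rfl⟩
      exact hmonoH (le_of_lt hb)
  have htend : Tendsto h (𝓝[>] a') (𝓝 (h a')) := key ▸ hmonoH.tendsto_nhdsGT a'
  have hcwa : ContinuousWithinAt h (Set.Ici a') a' :=
    continuousWithinAt_Ioi_iff_Ici.1 htend
  have hcomp := (clamp_rc (h a')).comp hcwa (fun y hy => hmonoH hy)
  exact hcomp
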